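/- Correctness of the perturbed affine-function circuit: Let n ≥ 1 and let each of p¹, p², a, g¹, g² be given by bits (·)_i^+, (·)_i^− ∈ {0,1} for i = 1, …, n, each with either all plus-bits zero or all minus-bits zero, encoding the real values Dec(·) := Σ_i (·)_i^+/2^i − Σ_i (·)_i^−/2^i. Let x₁, x₂ ∈ ℝ with x₁ − Dec(p¹) ∈ [−2, 2] and x₂ − Dec(p²) ∈ [−2, 2], and let all perturbations lie in (−1, 1). Define Affine := CTB(x₁ − Dec(p¹), g¹) + CTB(x₂ − Dec(p²), g²) + Dec(a), where each CTB is the perturbed bit-multiplication sum CTB(u, y) = Σ_{i=1}^n (1/2^i)·BM(u, y_i^+; π_i^+) − Σ_{i=1}^n (1/2^i)·BM(u, y_i^−; π_i^−) with BM(u, b; π) = 4·(1−b) + max(−4, u − 8·(1−b) + π), using its own perturbations. Then Affine = (x₁ − Dec(p¹))·Dec(g¹) + (x₂ − Dec(p²))·Dec(g²) + Dec(a) + σ for some σ ∈ ℝ with |σ| ≤ 2·(maximum absolute value over all perturbations used). -/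

import Mathlib

/-- The perturbed bit-multiplication gadget: `BM(x, b; π) = 4(1−b) + max(−4, x − 8(1−b) + π)`. -/
noncomputable def BM (x b π : ℝ) : ℝ := 4 * (1 - b) + max (-4) (x - 8 * (1 - b) + π)

/-- The perturbed continuous-times-binary circuit. -/
noncomputable def CTB (n : ℕ) (x : ℝ) (yp ym πp πm : ℕ → ℝ) : ℝ :=
  (∑ i ∈ Finset.Icc 1 n, (1 / 2 ^ i : ℝ) * BM x (yp i) (πp i))
    - ∑ i ∈ Finset.Icc 1 n, (1 / 2 ^ i : ℝ) * BM x (ym i) (πm i)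

/-- Decoding of a (signed) binary encoding: `Dec(b) = Σ bp_i/2^i − Σ bm_i/2^i`. -/
noncomputable def Dec (n : ℕ) (bp bm : ℕ → ℝ) : ℝ :=
  (∑ i ∈ Finset.Icc 1 n, bp i / 2 ^ i) - ∑ i ∈ Finset.Icc 1 n, bm i / 2 ^ i

/-- A pair of bit-vectors is a good signed binary encoding: all bits are in {0,1} and
either all minus-bits are zero or all plus-bits are zero. -/
def GoodBin (n : ℕ) (bp bm : ℕ → ℝ) : Prop :=
  (∀ i, 1 ≤ i → i ≤ n → (bp i = 0 ∨ bp i = 1) ∧ (bm i = 0 ∨ bm i = 1)) ∧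
  ((∀ i, 1 ≤ i → i ≤ n → bm i = 0) ∨ (∀ i, 1 ≤ i → i ≤ n → bp i = 0))


lemma BM_eq (x b π : ℝ) (hb : b = 0 ∨ b = 1) (hx : x ∈ Set.Icc (-2:ℝ) 2)
    (hπ : π ∈ Set.Ioo (-1:ℝ) 1) : BM x b π = (x + π) * b := by
  obtain ⟨hx1, hx2⟩ := hx
  obtain ⟨hπ1, hπ2⟩ := hπ
  rcases hb with hb | hb <;> subst hb <;> unfold BM
  · rw [max_eq_left (by linarith)]; ring
  · rw [max_eq_right (by linarith)]; ring

lemma geom_sum_Icc (n : ℕ) : ∑ i ∈ Finset.Icc 1 n, (1 / 2 ^ i : ℝ) = 1 - 1 / 2 ^ n := by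
  induction n with
  | zero => simp
  | succ n ih =>
      rw [Finset.sum_Icc_succ_top (Nat.le_add_left 1 n), ih]
      have : (2:ℝ) ^ (n+1) ≠ 0 := by positivity
      field_simp
      ring

lemma CTB_correct (n : ℕ) (x : ℝ) (hx : x ∈ Set.Icc (-2:ℝ) 2) (yp ym πp πm : ℕ → ℝ)
    (hy : GoodBin n yp ym)
    (hπ : ∀ i, 1 ≤ i → i ≤ n → πp i ∈ Set.Ioo (-1:ℝ) 1 ∧ πm i ∈ Set.Ioo (-1:ℝ) 1)
    (M : ℝ) (hM : ∀ i, 1 ≤ i → i ≤ n → |πp i| ≤ M ∧ |πm i| ≤ M) (hM0 : 0 ≤ M) :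
    ∃ σ : ℝ, CTB n x yp ym πp πm = x * Dec n yp ym + σ ∧ |σ| ≤ M := by
  refine ⟨(∑ i ∈ Finset.Icc 1 n, πp i * yp i / 2 ^ i)
      - ∑ i ∈ Finset.Icc 1 n, πm i * ym i / 2 ^ i, ?_, ?_⟩
  · unfold CTB Dec
    have h1 : ∀ i ∈ Finset.Icc 1 n, (1 / 2 ^ i : ℝ) * BM x (yp i) (πp i)
        = x * (yp i / 2 ^ i) + πp i * yp i / 2 ^ i := by
      intro i hi
      simp only [Finset.mem_Icc] at hi
      rw [BM_eq x _ _ ((hy.1 i hi.1 hi.2).1) hx ((hπ i hi.1 hi.2).1)]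
      ring
    have h2 : ∀ i ∈ Finset.Icc 1 n, (1 / 2 ^ i : ℝ) * BM x (ym i) (πm i)
        = x * (ym i / 2 ^ i) + πm i * ym i / 2 ^ i := by
      intro i hi
      simp only [Finset.mem_Icc] at hi
      rw [BM_eq x _ _ ((hy.1 i hi.1 hi.2).2) hx ((hπ i hi.1 hi.2).2)]
      ring
    rw [Finset.sum_congr rfl h1, Finset.sum_congr rfl h2, Finset.sum_add_distrib,
      Finset.sum_add_distrib, ← Finset.mul_sum, ← Finset.mul_sum]
    ring
  · have key : ∀ (q y : ℕ → ℝ), (∀ i, 1 ≤ i → i ≤ n → |q i| ≤ M) →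
        (∀ i, 1 ≤ i → i ≤ n → y i = 0 ∨ y i = 1) →
        |∑ i ∈ Finset.Icc 1 n, q i * y i / 2 ^ i| ≤ M := by
      intro q y hq hy'
      calc |∑ i ∈ Finset.Icc 1 n, q i * y i / 2 ^ i|
          ≤ ∑ i ∈ Finset.Icc 1 n, |q i * y i / 2 ^ i| := Finset.abs_sum_le_sum_abs _ _
        _ ≤ ∑ i ∈ Finset.Icc 1 n, M * (1 / 2 ^ i) := by
            apply Finset.sum_le_sum
            intro i hi
            simp only [Finset.mem_Icc] at hi
            have hyb : |y i| ≤ 1 := by rcases hy' i hi.1 hi.2 with h | h <;> simp [h]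
            have hb : |q i| * |y i| ≤ M :=
              (mul_le_mul (hq i hi.1 hi.2) hyb (abs_nonneg _) hM0).trans_eq (mul_one M)
            calc |q i * y i / 2 ^ i| = |q i| * |y i| * (1 / 2 ^ i) := by
                  rw [abs_div, abs_mul, abs_of_nonneg (by positivity : (0:ℝ) ≤ 2 ^ i)]; ring
              _ ≤ M * (1 / 2 ^ i) := mul_le_mul_of_nonneg_right hb (by positivity)
        _ = M * (1 - 1 / 2 ^ n) := by rw [← Finset.mul_sum, geom_sum_Icc]
        _ ≤ M := by
            have : (0:ℝ) ≤ 1 / 2 ^ n := by positivity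
            nlinarith
    rcases hy.2 with h | h
    · have : ∑ i ∈ Finset.Icc 1 n, πm i * ym i / 2 ^ i = 0 := by
        apply Finset.sum_eq_zero
        intro i hi
        simp only [Finset.mem_Icc] at hi
        rw [h i hi.1 hi.2]; ring
      rw [this, sub_zero]
      exact key πp yp (fun i h1 h2 => (hM i h1 h2).1) (fun i h1 h2 => (hy.1 i h1 h2).1)
    · have : ∑ i ∈ Finset.Icc 1 n, πp i * yp i / 2 ^ i = 0 := by
        apply Finset.sum_eq_zero
        intro i hi
        simp only [Finset.mem_Icc] at hi
        rw [h i hi.1 hi.2]; ring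
      rw [this, zero_sub, abs_neg]
      exact key πm ym (fun i h1 h2 => (hM i h1 h2).2) (fun i h1 h2 => (hy.1 i h1 h2).2)

/-- Correctness of the perturbed affine-function circuit. -/
theorem affine_correct (n : ℕ) (hn : 1 ≤ n)
    (p1p p1m p2p p2m aP aM g1p g1m g2p g2m : ℕ → ℝ)
    (hp1 : GoodBin n p1p p1m) (hp2 : GoodBin n p2p p2m) (ha : GoodBin n aP aM)
    (hg1 : GoodBin n g1p g1m) (hg2 : GoodBin n g2p g2m)
    (x1 x2 : ℝ)
    (hx1 : x1 - Dec n p1p p1m ∈ Set.Icc (-2 : ℝ) 2)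
    (hx2 : x2 - Dec n p2p p2m ∈ Set.Icc (-2 : ℝ) 2)
    (π1p π1m π2p π2m : ℕ → ℝ)
    (hπ : ∀ i, 1 ≤ i → i ≤ n →
      π1p i ∈ Set.Ioo (-1 : ℝ) 1 ∧ π1m i ∈ Set.Ioo (-1 : ℝ) 1 ∧
      π2p i ∈ Set.Ioo (-1 : ℝ) 1 ∧ π2m i ∈ Set.Ioo (-1 : ℝ) 1)
    (M : ℝ)
    (hM : ∀ i, 1 ≤ i → i ≤ n → |π1p i| ≤ M ∧ |π1m i| ≤ M ∧ |π2p i| ≤ M ∧ |π2m i| ≤ M) :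
    ∃ σ : ℝ,
      CTB n (x1 - Dec n p1p p1m) g1p g1m π1p π1m
        + CTB n (x2 - Dec n p2p p2m) g2p g2m π2p π2m
        + Dec n aP aM
      = (x1 - Dec n p1p p1m) * Dec n g1p g1m + (x2 - Dec n p2p p2m) * Dec n g2p g2m
          + Dec n aP aM + σ
      ∧ |σ| ≤ 2 * M := by
  
  have hM0 : 0 ≤ M := le_trans (abs_nonneg _) (hM 1 le_rfl hn).1
  obtain ⟨σ1, e1, b1⟩ := CTB_correct n _ hx1 g1p g1m π1p π1m hg1
    (fun i h1 h2 => ⟨(hπ i h1 h2).1, (hπ i h1 h2).2.1⟩) M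
    (fun i h1 h2 => ⟨(hM i h1 h2).1, (hM i h1 h2).2.1⟩) hM0
  obtain ⟨σ2, e2, b2⟩ := CTB_correct n _ hx2 g2p g2m π2p π2m hg2
    (fun i h1 h2 => ⟨(hπ i h1 h2).2.2.1, (hπ i h1 h2).2.2.2⟩) M
    (fun i h1 h2 => ⟨(hM i h1 h2).2.2.1, (hM i h1 h2).2.2.2⟩) hM0
  exact ⟨σ1 + σ2, by rw [e1, e2]; ring, (abs_add_le _ _).trans (by linarith)⟩
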